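/- arXiv:1412.2949 — 2 statements merged into one kernel-verified Lean document; each statement's English description precedes it below -/
import Mathlib

section
/- Let u be an a-sequence. If the subgroup t_u(T) = {x : u_n x → 0} is open in the topology τ_u induced by the metric ρ_u(x,y) = sup{d(x,y), sup_n d(u_n x, u_n y)}, then the sequence of ratios q_n = u_n/u_{n-1} is bounded. -/
open Filter Topology

private lemma unitAddCircle_norm_eq (y : ℝ) :
    ‖((y : ℝ) : AddCircle (1 : ℝ))‖ = |y - round y| := by
  rw [AddCircle.norm_eq]
  norm_num

/-- Proposition: for an a-sequence `u`, if the subgroup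
`t_u(𝕋) = {x : u_n x → 0}` is open in the topology induced by
`ρ_u(x,y) = sup{d(x,y), sup_n d(u_n x, u_n y)}` — equivalently, being a
subgroup, if it contains a `ρ_u`-ball around `0` — then the sequence of ratios
`q_n = u_{n+1}/u_n` is bounded. -/
theorem ratios_bounded_of_tu_rho_open (u : ℕ → ℕ) (hu : StrictMono u)
    (hpos : 1 ≤ u 0) (hdvd : ∀ n, u n ∣ u (n + 1))
    (hopen : ∃ ε : ℝ, 0 < ε ∧
      {x : AddCircle (1 : ℝ) | max ‖x‖ (⨆ n : ℕ, ‖(u n : ℤ) • x‖) < ε} ⊆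
        {x : AddCircle (1 : ℝ) |
          Tendsto (fun n => (u n : ℤ) • x) atTop (𝓝 0)}) :
    ∃ C : ℕ, ∀ n, u (n + 1) ≤ C * u n := by
  classical
  by_contra hCon
  push_neg at hCon
  obtain ⟨ε₀, hε₀, hball⟩ := hopen
  -- basic facts about `u`
  have upos : ∀ n, 0 < u n := fun n => lt_of_lt_of_le hpos (hu.monotone (Nat.zero_le n))
  have udvd : ∀ {a b : ℕ}, a ≤ b → u a ∣ u b := by
    intro a b h
    induction b with
    | zero => exact Nat.le_zero.mp h ▸ dvd_rfl
    | succ b ih =>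
      rcases Nat.lt_or_ge a (b + 1) with h' | h'
      · exact (ih (Nat.lt_succ_iff.mp h')).trans (hdvd b)
      · have : a = b + 1 := le_antisymm h h'
        rw [this]
  have udouble : ∀ n, 2 * u n ≤ u (n + 1) := by
    intro n
    obtain ⟨c, hc⟩ := hdvd n
    have hlt := hu (Nat.lt_succ_self n)
    rcases Nat.lt_or_ge c 2 with h2 | h2
    · interval_cases c <;> simp_all <;> omega
    · calc 2 * u n ≤ c * u n := Nat.mul_le_mul_right _ h2
        _ = u (n + 1) := by rw [hc]; ring
  -- shrink ε
  set ε : ℝ := min ε₀ (1 / 2) with hεdef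
  have hε : 0 < ε := lt_min hε₀ (by norm_num)
  have hεhalf : ε ≤ 1 / 2 := min_le_right _ _
  have hεε₀ : ε ≤ ε₀ := min_le_left _ _
  set B : ℕ := ⌈(24 : ℝ) / ε⌉₊ with hBdef
  have hB : (24 : ℝ) / ε ≤ B := Nat.le_ceil _
  choose f hf using hCon
  -- the bad indices
  let m : ℕ → ℕ := fun k => Nat.rec (f B) (fun _ mk => f (B + u (mk + 3))) k
  have hm0 : m 0 = f B := rfl
  have hmsucc : ∀ k, m (k + 1) = f (B + u (m k + 3)) := fun _ => rfl
  clear_value m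
  have hqlt : ∀ k, B * u (m k) < u (m k + 1) := by
    intro k
    cases k with
    | zero => rw [hm0]; exact hf B
    | succ k =>
      rw [hmsucc]
      calc B * u (f (B + u (m k + 3)))
          ≤ (B + u (m k + 3)) * u (f (B + u (m k + 3))) :=
            Nat.mul_le_mul_right _ (Nat.le_add_right _ _)
        _ < _ := hf _
  have hstep : ∀ k, m k + 3 ≤ m (k + 1) := by
    intro k
    by_contra hcon
    push_neg at hcon
    have h1 : u (m (k + 1) + 1) ≤ u (m k + 3) := hu.monotone (by omega)
    have h2 := hf (B + u (m k + 3))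
    rw [← hmsucc] at h2
    have h3 : u (m k + 3) ≤ (B + u (m k + 3)) * u (m (k + 1)) := by
      calc u (m k + 3) ≤ u (m k + 3) * u (m (k + 1)) :=
            Nat.le_mul_of_pos_right _ (upos _)
        _ ≤ (B + u (m k + 3)) * u (m (k + 1)) :=
            Nat.mul_le_mul_right _ (by omega)
    omega
  have mmono : StrictMono m := strictMono_nat_of_lt_succ (fun k => by have := hstep k; omega)
  have hgrow1 : ∀ k, 8 * u (m k) ≤ u (m (k + 1)) := by
    intro k
    have h1 : 2 * u (m k) ≤ u (m k + 1) := udouble _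
    have h2 : 2 * u (m k + 1) ≤ u (m k + 2) := udouble _
    have h3 : 2 * u (m k + 2) ≤ u (m k + 3) := udouble _
    have h4 : u (m k + 3) ≤ u (m (k + 1)) := hu.monotone (hstep k)
    omega
  have hgrow : ∀ j k, 8 ^ k * u (m j) ≤ u (m (j + k)) := by
    intro j k
    induction k with
    | zero => simp
    | succ k ih =>
      have h1 := hgrow1 (j + k)
      have h2 : 8 ^ (k + 1) * u (m j) = 8 * (8 ^ k * u (m j)) := by ring
      have h3 : 8 * (8 ^ k * u (m j)) ≤ 8 * u (m (j + k)) := Nat.mul_le_mul_left _ ih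
      have h4 : j + (k + 1) = (j + k) + 1 := by omega
      rw [h4]
      omega
  -- the ratios at the bad indices
  set q : ℕ → ℕ := fun k => u (m k + 1) / u (m k) with hqdef
  have hqmul : ∀ k, u (m k + 1) = q k * u (m k) :=
    fun k => (Nat.div_mul_cancel (hdvd (m k))).symm
  have hqB : ∀ k, B < q k := by
    intro k
    have h := hqlt k
    rw [hqmul k] at h
    exact lt_of_mul_lt_mul_right h (Nat.zero_le _)
  have hqpos : ∀ k, (0 : ℝ) < q k := by
    intro k
    have : 0 < q k := lt_of_le_of_lt (Nat.zero_le B) (hqB k)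
    exact_mod_cast this
  have humpos : ∀ k : ℕ, (0 : ℝ) < u (m k) := fun k => by exact_mod_cast upos (m k)
  -- the numerators
  set a : ℕ → ℕ := fun k => ⌈ε * q k / 6⌉₊ with hadef
  have harlow : ∀ k, ε / 6 ≤ (a k : ℝ) / q k := by
    intro k
    have h := Nat.le_ceil (ε * q k / 6)
    rw [le_div_iff₀ (hqpos k)]
    calc ε / 6 * q k = ε * q k / 6 := by ring
      _ ≤ a k := h
  have harhigh : ∀ k, (a k : ℝ) / q k ≤ ε / 4 := by
    intro k
    have h1 : (a k : ℝ) < ε * q k / 6 + 1 :=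
      Nat.ceil_lt_add_one (by positivity)
    have h2 : (24 : ℝ) / ε < q k := by
      have : (B : ℝ) < q k := by exact_mod_cast hqB k
      linarith
    have h3 : (24 : ℝ) < q k * ε := by
      rw [div_lt_iff₀ hε] at h2
      linarith
    rw [div_le_iff₀ (hqpos k)]
    nlinarith
  -- the building blocks of x
  set t : ℕ → ℝ := fun k => (a k : ℝ) / (u (m k + 1)) with htdef
  have ht_eq : ∀ k, t k = ((a k : ℝ) / q k) / u (m k) := by
    intro k
    show (a k : ℝ) / (u (m k + 1)) = _
    rw [hqmul k]
    push_cast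
    rw [div_div]
  have htpos : ∀ k, 0 ≤ t k := fun k => div_nonneg (Nat.cast_nonneg _) (Nat.cast_nonneg _)
  have ht_high : ∀ k, t k ≤ ε / 4 / u (m k) := by
    intro k
    rw [ht_eq k]
    exact (div_le_div_iff_of_pos_right (humpos k)).mpr (harhigh k)
  -- term bound
  have hterm : ∀ j k n, n ≤ m j → (u n : ℝ) * t (k + j) ≤ ε / 4 * (1 / 8) ^ k := by
    intro j k n hn
    have h1 : t (k + j) ≤ ε / 4 / u (m (k + j)) := ht_high _
    have h2 : (u n : ℝ) * 8 ^ k ≤ u (m (k + j)) := by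
      have hnat : u n * 8 ^ k ≤ u (m (k + j)) := by
        calc u n * 8 ^ k = 8 ^ k * u n := by ring
          _ ≤ 8 ^ k * u (m j) := Nat.mul_le_mul_left _ (hu.monotone hn)
          _ ≤ u (m (j + k)) := hgrow j k
          _ = u (m (k + j)) := by rw [Nat.add_comm]
      exact_mod_cast hnat
    have h4 : (0 : ℝ) < u (m (k + j)) := humpos _
    have h5 : (u n : ℝ) * t (k + j) ≤ (u n : ℝ) * (ε / 4 / u (m (k + j))) :=
      mul_le_mul_of_nonneg_left h1 (Nat.cast_nonneg _)
    have h6 : (u n : ℝ) * (ε / 4 / u (m (k + j))) ≤ ε / 4 * (1 / 8) ^ k := by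
      have h7 : (u n : ℝ) * (ε / 4 / u (m (k + j))) = (u n : ℝ) * (ε / 4) / u (m (k + j)) := by
        ring
      have h8 : ε / 4 * (1 / 8 : ℝ) ^ k = ε / 4 / 8 ^ k := by
        rw [one_div_pow, mul_one_div]
      rw [h7, h8, div_le_div_iff₀ h4 (by positivity)]
      nlinarith [mul_le_mul_of_nonneg_left h2 (by positivity : (0 : ℝ) ≤ ε / 4)]
    exact h5.trans h6
  have hu0 : (1 : ℝ) ≤ u 0 := by exact_mod_cast hpos
  have htb : ∀ k, t k ≤ ε / 4 * (1 / 8) ^ k := by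
    intro k
    have h := hterm 0 k 0 (Nat.zero_le _)
    rw [Nat.add_zero] at h
    nlinarith [htpos k, mul_nonneg (by linarith : (0 : ℝ) ≤ (u 0 : ℝ) - 1) (htpos k)]
  have hsumgeo : Summable (fun k : ℕ => ε / 4 * (1 / 8 : ℝ) ^ k) :=
    (summable_geometric_of_lt_one (by norm_num) (by norm_num)).mul_left _
  have hsum : Summable t := Summable.of_nonneg_of_le htpos htb hsumgeo
  have hgeo : ∑' k : ℕ, ε / 4 * (1 / 8 : ℝ) ^ k = 2 * ε / 7 := by
    rw [tsum_mul_left, tsum_geometric_of_lt_one (by norm_num) (by norm_num)]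
    norm_num
    ring
  set x : ℝ := ∑' k, t k with hxdef
  have hsum_shift : ∀ j, Summable (fun k => t (k + j)) :=
    fun j => (summable_nat_add_iff j).mpr hsum
  -- the splitting index
  have hmge : ∀ k, k ≤ m k := fun k => mmono.le_apply
  have hex : ∀ n : ℕ, ∃ k, n ≤ m k := fun n => ⟨n, hmge n⟩
  haveI hdec : ∀ n : ℕ, DecidablePred fun k => n ≤ m k := fun n k => Nat.decLe n (m k)
  set J : ℕ → ℕ := fun n => Nat.find (hex n) with hJdef
  have hJ1 : ∀ n, n ≤ m (J n) := fun n => Nat.find_spec (hex n)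
  have hJ2 : ∀ n i, i < J n → m i + 1 ≤ n := by
    intro n i hi
    have := Nat.find_min (hex n) hi
    omega
  -- the fractional part
  set R : ℕ → ℝ := fun n => (u n : ℝ) * ∑' k, t (k + J n) with hRdef
  have hR0 : ∀ n, 0 ≤ R n :=
    fun n => mul_nonneg (Nat.cast_nonneg _) (tsum_nonneg fun k => htpos _)
  have hRle : ∀ n, R n ≤ 2 * ε / 7 := by
    intro n
    show (u n : ℝ) * ∑' k, t (k + J n) ≤ 2 * ε / 7
    rw [← tsum_mul_left]
    calc ∑' k, (u n : ℝ) * t (k + J n) ≤ ∑' k : ℕ, ε / 4 * (1 / 8 : ℝ) ^ k :=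
          Summable.tsum_le_tsum (fun k => hterm (J n) k n (hJ1 n))
            ((hsum_shift (J n)).mul_left _) hsumgeo
      _ = 2 * ε / 7 := hgeo
  have hRlow : ∀ jj, ε / 6 ≤ R (m jj) := by
    intro jj
    have hJm : J (m jj) = jj := by
      have h1 : J (m jj) ≤ jj := Nat.find_le (le_refl (m jj))
      have h2 : jj ≤ J (m jj) := mmono.le_iff_le.mp (hJ1 (m jj))
      omega
    show ε / 6 ≤ (u (m jj) : ℝ) * ∑' k, t (k + J (m jj))
    rw [hJm]
    have hfirst : t (0 + jj) ≤ ∑' k, t (k + jj) :=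
      Summable.le_tsum (hsum_shift jj) 0 (fun k _ => htpos _)
    rw [Nat.zero_add] at hfirst
    have hune : ((u (m jj) : ℝ)) ≠ 0 := (humpos jj).ne'
    have hqne : ((q jj : ℝ)) ≠ 0 := (hqpos jj).ne'
    have h2 : (u (m jj) : ℝ) * t jj = (a jj : ℝ) / q jj := by
      rw [ht_eq jj, mul_comm, div_mul_cancel₀ _ hune]
    calc ε / 6 ≤ (a jj : ℝ) / q jj := harlow jj
      _ = (u (m jj) : ℝ) * t jj := h2.symm
      _ ≤ (u (m jj) : ℝ) * ∑' k, t (k + jj) :=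
          mul_le_mul_of_nonneg_left hfirst (Nat.cast_nonneg _)
  -- the integer part
  have hint : ∀ n, ∃ N : ℕ, (u n : ℝ) * x = N + R n := by
    intro n
    have hsplit : (∑ i ∈ Finset.range (J n), t i) + ∑' k, t (k + J n) = x :=
      Summable.sum_add_tsum_nat_add (J n) hsum
    refine ⟨∑ i ∈ Finset.range (J n), a i * (u n / u (m i + 1)), ?_⟩
    have hci : ∀ i ∈ Finset.range (J n),
        (u n : ℝ) * t i = ((a i * (u n / u (m i + 1)) : ℕ) : ℝ) := by
      intro i hi
      rw [Finset.mem_range] at hi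
      obtain ⟨d, hd⟩ := udvd (hJ2 n i hi)
      have hdq : u n / u (m i + 1) = d := by
        rw [hd, Nat.mul_div_cancel_left _ (upos _)]
      rw [hdq]
      show (u n : ℝ) * ((a i : ℝ) / (u (m i + 1))) = ((a i * d : ℕ) : ℝ)
      have h0 : ((u (m i + 1) : ℝ)) ≠ 0 := by
        exact_mod_cast (upos (m i + 1)).ne'
      rw [hd]
      push_cast
      field_simp
    calc (u n : ℝ) * x
        = (u n : ℝ) * ((∑ i ∈ Finset.range (J n), t i) + ∑' k, t (k + J n)) := by
          rw [hsplit]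
      _ = (∑ i ∈ Finset.range (J n), (u n : ℝ) * t i) + R n := by
          rw [mul_add, Finset.mul_sum]
      _ = ((∑ i ∈ Finset.range (J n), a i * (u n / u (m i + 1)) : ℕ) : ℝ) + R n := by
          rw [Finset.sum_congr rfl hci]
          push_cast
          ring
  -- norm values
  have hnormval : ∀ n, ‖(u n : ℤ) • ((x : ℝ) : AddCircle (1 : ℝ))‖ = R n := by
    intro n
    obtain ⟨N, hN⟩ := hint n
    have hcoe : (u n : ℤ) • ((x : ℝ) : AddCircle (1 : ℝ))
        = (((u n : ℝ) * x : ℝ) : AddCircle (1 : ℝ)) := by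
      rw [← AddCircle.coe_zsmul]
      congr 1
      rw [zsmul_eq_mul]
      push_cast
      ring
    have hRhalf : R n < 1 / 2 := by
      have := hRle n
      linarith [hεhalf, hε]
    have hroundR : round (R n) = 0 :=
      round_eq_zero_iff.mpr (Set.mem_Ico.mpr ⟨by linarith [hR0 n], hRhalf⟩)
    have hNcast : ((N : ℝ)) = ((N : ℤ) : ℝ) := by push_cast; ring
    rw [hcoe, unitAddCircle_norm_eq, hN, hNcast, round_intCast_add, hroundR, add_zero]
    push_cast
    rw [show (N : ℝ) + R n - (N : ℝ) = R n by ring, abs_of_nonneg (hR0 n)]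
  -- x is in the ball
  have hx0 : 0 ≤ x := tsum_nonneg htpos
  have hxle : x ≤ 2 * ε / 7 := by
    have h := Summable.tsum_le_tsum htb hsum hsumgeo
    rw [hgeo] at h
    exact h
  have hmem : ((x : ℝ) : AddCircle (1 : ℝ)) ∈
      {y : AddCircle (1 : ℝ) | max ‖y‖ (⨆ n : ℕ, ‖(u n : ℤ) • y‖) < ε₀} := by
    simp only [Set.mem_setOf_eq]
    have hxn : ‖((x : ℝ) : AddCircle (1 : ℝ))‖ ≤ 2 * ε / 7 := by
      rw [unitAddCircle_norm_eq]
      have h1 : round x = 0 :=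
        round_eq_zero_iff.mpr (Set.mem_Ico.mpr ⟨by linarith, by linarith [hεhalf]⟩)
      rw [h1, Int.cast_zero, sub_zero, abs_of_nonneg hx0]
      exact hxle
    have hsup : (⨆ n : ℕ, ‖(u n : ℤ) • ((x : ℝ) : AddCircle (1 : ℝ))‖) ≤ 2 * ε / 7 := by
      apply ciSup_le
      intro n
      rw [hnormval n]
      exact hRle n
    have h27 : 2 * ε / 7 < ε₀ := lt_of_lt_of_le (by linarith) hεε₀
    exact max_lt (lt_of_le_of_lt hxn h27) (lt_of_le_of_lt hsup h27)
  have hT : Tendsto (fun n => (u n : ℤ) • ((x : ℝ) : AddCircle (1 : ℝ))) atTop (𝓝 0) :=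
    hball hmem
  have hTn : Tendsto (fun n => ‖(u n : ℤ) • ((x : ℝ) : AddCircle (1 : ℝ))‖) atTop (𝓝 0) := by
    have := hT.norm
    simpa using this
  have hev : ∀ᶠ n in atTop, ‖(u n : ℤ) • ((x : ℝ) : AddCircle (1 : ℝ))‖ < ε / 6 :=
    hTn.eventually_lt_const (by positivity)
  obtain ⟨Nn, hNn⟩ := eventually_atTop.mp hev
  have hfin := hNn (m Nn) (le_trans (hmge Nn) (le_refl _))
  rw [hnormval (m Nn)] at hfin
  linarith [hRlow Nn]
end

section
/- For an a-sequence u, the following are equivalent: (a) the ratio sequence (q_n) is bounded; (b) t_u(T) ⊆ Q/Z; (c) t_u(T) is countable; (d) t_u(T) is an F_σ-subset of T. In particular, if u is an a-sequence with unbounded ratios (e.g., u_n = n! or u_n = 2^{2^n}), then t_u(T) is not an F_σ-subset of T. -/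
open Filter Topology Set ZeroAtInfty

namespace TuAux

noncomputable section




/-- The coercion of an integer to `AddCircle 1` is zero. -/
lemma coe_int_eq_zero (m : ℤ) : ((m : ℝ) : AddCircle (1 : ℝ)) = 0 := by
  rw [AddCircle.coe_eq_zero_iff]
  exact ⟨m, by simp⟩

lemma coe_nat_eq_zero (m : ℕ) : ((m : ℝ) : AddCircle (1 : ℝ)) = 0 := by
  simpa using coe_int_eq_zero m

lemma zsmul_coe (m : ℤ) (r : ℝ) :
    (m : ℤ) • ((r : AddCircle (1 : ℝ))) = (((m : ℝ) * r : ℝ) : AddCircle (1 : ℝ)) := by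
  rw [← AddCircle.coe_zsmul]
  norm_num

lemma norm_coe_of {t : ℝ} (h0 : 0 ≤ t) (h1 : t < 1 / 2) :
    ‖((t : ℝ) : AddCircle (1 : ℝ))‖ = t := by
  have : round t = 0 := round_eq_zero_iff.2 ⟨by linarith, h1⟩
  rw [show ((t : ℝ) : AddCircle (1:ℝ)) = (t : UnitAddCircle) from rfl,
    UnitAddCircle.norm_eq, this]
  simpa using abs_of_nonneg h0

lemma norm_coe_le {t : ℝ} (h0 : 0 ≤ t) : ‖((t : ℝ) : AddCircle (1 : ℝ))‖ ≤ t := by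
  rw [show ((t : ℝ) : AddCircle (1:ℝ)) = (t : UnitAddCircle) from rfl, UnitAddCircle.norm_eq]
  have h := abs_sub_round t
  have : |t - round t| ≤ |t| := by
    rcases le_or_gt (1/2) t with h' | h'
    · calc |t - round t| ≤ 1/2 := h
        _ ≤ |t| := by rw [abs_of_nonneg h0]; linarith
    · have : round t = 0 := round_eq_zero_iff.2 ⟨by linarith, h'⟩
      simp [this]
  simpa [abs_of_nonneg h0] using this

/-- norm of a small multiple. -/
lemma norm_nsmul_eq {z : AddCircle (1 : ℝ)} (q : ℕ)
    (h : (q : ℝ) * ‖z‖ < 1 / 2) : ‖(q : ℤ) • z‖ = q * ‖z‖ := by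
  obtain ⟨r₀, rfl⟩ : ∃ r₀ : ℝ, (r₀ : AddCircle (1:ℝ)) = z := by
    exact Quotient.exists_rep z
  set r : ℝ := r₀ - round r₀ with hr
  have hcoe : ((r : ℝ) : AddCircle (1:ℝ)) = (r₀ : AddCircle (1:ℝ)) := by
    rw [hr, sub_eq_add_neg, AddCircle.coe_add, AddCircle.coe_neg, coe_int_eq_zero]
    simp
  have hrange : -(1/2) ≤ r ∧ r < 1/2 := by
    constructor
    · nlinarith [abs_sub_round r₀, abs_nonneg r, neg_abs_le (r₀ - round r₀)]
    · have h1 : (round r₀ : ℝ) = ⌊r₀ + 1/2⌋ := by rw [round_eq]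
      have h2 : (⌊r₀ + 1/2⌋ : ℝ) > r₀ + 1/2 - 1 := by
        have := Int.sub_one_lt_floor (r₀ + 1/2)
        linarith
      rw [hr, h1]; linarith
  have hround : round r = 0 := round_eq_zero_iff.2 ⟨hrange.1, hrange.2⟩
  have hnorm : ‖(r₀ : AddCircle (1:ℝ))‖ = |r| := by
    rw [← hcoe, show ((r : ℝ) : AddCircle (1:ℝ)) = (r : UnitAddCircle) from rfl,
      UnitAddCircle.norm_eq, hround]
    simp
  have habs : |(q : ℝ) * r| < 1/2 := by
    rw [abs_mul, abs_of_nonneg (by positivity : (0:ℝ) ≤ (q:ℝ))]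
    rw [hnorm] at h; exact h
  have hroundq : round ((q:ℝ) * r) = 0 :=
    round_eq_zero_iff.2 ⟨by nlinarith [neg_abs_le ((q:ℝ)*r)], by nlinarith [le_abs_self ((q:ℝ)*r)]⟩
  have hnr : ‖((r : ℝ) : AddCircle (1:ℝ))‖ = |r| := by
    rw [show ((r : ℝ) : AddCircle (1:ℝ)) = (r : UnitAddCircle) from rfl,
      UnitAddCircle.norm_eq, hround]
    simp
  rw [← hcoe, zsmul_coe, show (((q : ℤ) : ℝ)) = (q:ℝ) by norm_num,
    show (((q:ℝ) * r : ℝ) : AddCircle (1:ℝ)) = (((q:ℝ) * r : ℝ) : UnitAddCircle) from rfl,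
    UnitAddCircle.norm_eq, hroundq, hnr]
  push_cast
  rw [sub_zero, abs_mul, abs_of_nonneg (by positivity : (0:ℝ) ≤ (q:ℝ))]



section
variable (u : ℕ → ℕ) (hu : StrictMono u) (hpos : 1 ≤ u 0) (hdvd : ∀ n, u n ∣ u (n + 1))

include hu hpos in
lemma u_pos : ∀ n, 0 < u n := fun n => lt_of_lt_of_le hpos (hu.monotone (Nat.zero_le n))

include hdvd in
lemma u_dvd_of_le : ∀ {i j}, i ≤ j → u i ∣ u j := by
  intro i j hij
  induction j with
  | zero => simpa [Nat.le_zero.mp hij]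
  | succ j ih =>
    rcases Nat.lt_or_ge i (j+1) with h | h
    · exact dvd_trans (ih (Nat.lt_succ_iff.mp h)) (hdvd j)
    · have : i = j + 1 := le_antisymm hij h
      simp [this]

include hu hpos hdvd in
lemma u_double : ∀ n, 2 * u n ≤ u (n + 1) := by
  intro n
  obtain ⟨q, hq⟩ := hdvd n
  have h1 : u n < u (n+1) := hu (Nat.lt_succ_self n)
  have hupos := u_pos u hu hpos n
  have hq2 : 2 ≤ q := by
    by_contra hcon
    interval_cases q <;> simp_all <;> omega
  calc 2 * u n ≤ q * u n := Nat.mul_le_mul_right _ hq2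
    _ = u (n + 1) := by rw [hq, mul_comm]

include hu hpos hdvd in
lemma u_pow_le : ∀ i j, i ≤ j → 2 ^ (j - i) * u i ≤ u j := by
  intro i j hij
  induction j with
  | zero => simpa [Nat.le_zero.mp hij]
  | succ j ih =>
    rcases Nat.lt_or_ge i (j+1) with h | h
    · have hij' : i ≤ j := Nat.lt_succ_iff.mp h
      have := ih hij'
      have hd := u_double u hu hpos hdvd j
      have : 2 ^ (j + 1 - i) * u i = 2 * (2 ^ (j - i) * u i) := by
        rw [← mul_assoc, ← pow_succ']
        congr 2
        omega
      omega
    · have : i = j + 1 := le_antisymm hij h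
      simp [this]

end



variable (u : ℕ → ℕ)

theorem imp_ab (hu : StrictMono u) (hpos : 1 ≤ u 0) (hdvd : ∀ n, u n ∣ u (n + 1))
    (hb : ∃ C : ℕ, ∀ n, u (n + 1) ≤ C * u n) :
    ∀ x : AddCircle (1 : ℝ),
      Tendsto (fun n => (u n : ℤ) • x) atTop (𝓝 0) → IsOfFinAddOrder x := by
  obtain ⟨C, hC⟩ := hb
  have upos : ∀ n, 0 < u n := fun n => lt_of_lt_of_le hpos (hu.monotone (Nat.zero_le n))
  have hC1 : 1 ≤ C := by
    by_contra hcon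
    have : C = 0 := by omega
    subst this
    have h0 := hC 0
    simp at h0
    have := upos 1
    omega
  intro x hx
  have hCpos : (0:ℝ) < C := by positivity
  have heps : (0:ℝ) < 1 / (2 * C) := by positivity
  have hev : ∀ᶠ n in atTop, ‖(u n : ℤ) • x‖ < 1 / (2 * C) := by
    have hn : Tendsto (fun n => ‖(u n : ℤ) • x‖) atTop (𝓝 0) := by
      simpa using hx.norm
    exact hn.eventually (gt_mem_nhds heps)
  obtain ⟨N, hN⟩ := eventually_atTop.mp hev
  -- growth of norms
  have key : ∀ k, 2 ^ k * ‖(u N : ℤ) • x‖ ≤ ‖(u (N + k) : ℤ) • x‖ := by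
    intro k
    induction k with
    | zero => simp
    | succ k ih =>
      set z := (u (N + k) : ℤ) • x with hz
      obtain ⟨q, hq⟩ := hdvd (N + k)
      have hq2 : 2 ≤ q := by
        have h1 : u (N+k) < u (N+k+1) := hu (Nat.lt_succ_self _)
        have h2 := upos (N+k)
        rcases Nat.lt_or_ge q 2 with h | h
        · interval_cases q <;> simp_all
        · exact h
      have hqC : q ≤ C := by
        have h3 := hC (N + k)
        rw [hq, mul_comm (u (N+k)) q] at h3
        exact Nat.le_of_mul_le_mul_right h3 (upos _)
      have hzsmall : ‖z‖ < 1 / (2 * C) := hN (N+k) (Nat.le_add_right _ _)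
      have hmul : (q : ℝ) * ‖z‖ < 1 / 2 := by
        have h1 : (q:ℝ) ≤ (C:ℝ) := by exact_mod_cast hqC
        have h2 : ‖z‖ ≥ 0 := norm_nonneg _
        calc (q:ℝ) * ‖z‖ ≤ (C:ℝ) * ‖z‖ := by nlinarith
          _ < (C:ℝ) * (1 / (2*C)) := by
              apply mul_lt_mul_of_pos_left hzsmall hCpos
          _ = 1/2 := by
              field_simp
      have hsmul : (u (N + k + 1) : ℤ) • x = (q : ℤ) • z := by
        rw [hz, ← mul_smul, ← Int.natCast_mul, mul_comm q, ← hq]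
      have := norm_nsmul_eq q hmul
      rw [show N + (k+1) = N + k + 1 by omega, hsmul, this]
      have h2q : (2:ℝ) ≤ (q:ℝ) := by exact_mod_cast hq2
      have : (2:ℝ)^(k+1) * ‖(u N : ℤ) • x‖ ≤ 2 * ‖z‖ := by
        rw [pow_succ]
        have hnn : (0:ℝ) ≤ ‖(u N : ℤ) • x‖ := norm_nonneg _
        nlinarith [ih]
      nlinarith [norm_nonneg z]
  have hzero : ‖(u N : ℤ) • x‖ = 0 := by
    by_contra hne
    have hpos' : 0 < ‖(u N : ℤ) • x‖ := lt_of_le_of_ne (norm_nonneg _) (Ne.symm hne)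
    obtain ⟨k, hk⟩ := pow_unbounded_of_one_lt ((1 / (2*C)) / ‖(u N : ℤ) • x‖) (by norm_num : (1:ℝ) < 2)
    have h1 := key k
    have h2 := hN (N + k) (Nat.le_add_right _ _)
    have : (2:ℝ)^k * ‖(u N : ℤ) • x‖ < 1 / (2*C) := lt_of_le_of_lt h1 h2
    rw [div_lt_iff₀ hpos'] at hk
    linarith
  have : (u N : ℤ) • x = 0 := norm_eq_zero.mp hzero
  rw [isOfFinAddOrder_iff_nsmul_eq_zero]
  exact ⟨u N, upos N, by rwa [← natCast_zsmul]⟩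



theorem torsion_countable :
    {x : AddCircle (1 : ℝ) | IsOfFinAddOrder x}.Countable := by
  have hsub : {x : AddCircle (1 : ℝ) | IsOfFinAddOrder x} ⊆
      Set.range (fun q : ℚ => (((q : ℝ)) : AddCircle (1 : ℝ))) := by
    intro x hx
    obtain ⟨n, hn, hnx⟩ := isOfFinAddOrder_iff_nsmul_eq_zero.mp hx
    obtain ⟨r, rfl⟩ : ∃ r : ℝ, (r : AddCircle (1:ℝ)) = x := Quotient.exists_rep x
    have h1 : ((n • r : ℝ) : AddCircle (1:ℝ)) = 0 := by
      rw [AddCircle.coe_nsmul]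
      exact hnx
    rw [AddCircle.coe_eq_zero_iff] at h1
    obtain ⟨m, hm⟩ := h1
    refine ⟨(m : ℚ) / (n : ℚ), ?_⟩
    have hn0 : (n:ℝ) ≠ 0 := by positivity
    have : r = (m : ℝ) / (n : ℝ) := by
      field_simp
      rw [mul_comm]
      simpa [nsmul_eq_mul] using hm.symm
    simp only [this]
    push_cast
    norm_num
  exact (Set.countable_range _).mono hsub

theorem imp_cd (s : Set (AddCircle (1 : ℝ))) (hc : s.Countable) :
    ∃ F : ℕ → Set (AddCircle (1 : ℝ)), (∀ i, IsClosed (F i)) ∧ s = ⋃ i, F i := by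
  rcases s.eq_empty_or_nonempty with rfl | hne
  · exact ⟨fun _ => ∅, fun _ => isClosed_empty, by simp⟩
  · obtain ⟨f, rfl⟩ := Set.Countable.exists_eq_range hc hne
    exact ⟨fun i => {f i}, fun i => isClosed_singleton, by
      rw [← Set.range_eq_iUnion]⟩



variable (u : ℕ → ℕ)

lemma exists_big (hu : StrictMono u) (hpos : 1 ≤ u 0)
    (hnb : ∀ C : ℕ, ∃ n, C * u n < u (n + 1)) :
    ∀ m C, ∃ n, m < n ∧ C * u n < u (n + 1) := by
  have upos := u_pos u hu hpos
  intro m C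
  obtain ⟨n, hn⟩ := hnb ((C + 1) * u (m + 1))
  have h1 : u (m + 1) ≤ (C + 1) * u (m + 1) * u n := by
    calc u (m + 1) = 1 * u (m + 1) * 1 := by ring
      _ ≤ (C + 1) * u (m + 1) * u n :=
        Nat.mul_le_mul (Nat.mul_le_mul (by omega) le_rfl) (upos n)
  have h2 : u (m + 1) < u (n + 1) := lt_of_le_of_lt h1 hn
  have h3 : m + 1 < n + 1 := hu.lt_iff_lt.mp h2
  refine ⟨n, by omega, lt_of_le_of_lt ?_ hn⟩
  have h5 : C ≤ (C + 1) * u (m + 1) := by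
    calc C ≤ (C + 1) * 1 := by omega
      _ ≤ (C + 1) * u (m + 1) := Nat.mul_le_mul_left _ (upos _)
  exact Nat.mul_le_mul_right _ h5

/-- The key construction: with unbounded ratios, for every small `δ` there is a point `y`
outside `t_u` which is the limit of points of `t_u` that are uniformly `δ`-small together
with all the `u n`-multiples. -/
theorem construction (hu : StrictMono u) (hpos : 1 ≤ u 0) (hdvd : ∀ n, u n ∣ u (n + 1))
    (hnb : ∀ C : ℕ, ∃ n, C * u n < u (n + 1)) {δ : ℝ} (hδ0 : 0 < δ) (hδ1 : δ ≤ 1 / 16) :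
    ∃ (y : AddCircle (1:ℝ)) (Y : ℕ → AddCircle (1:ℝ)),
      (∀ K, Tendsto (fun m => (u m : ℤ) • Y K) atTop (𝓝 0)) ∧
      (∀ K, ‖Y K‖ ≤ 2 * δ) ∧
      (∀ K m, ‖(u m : ℤ) • Y K‖ ≤ 2 * δ) ∧
      Tendsto Y atTop (𝓝 y) ∧
      ¬ Tendsto (fun m => (u m : ℤ) • y) atTop (𝓝 0) := by
  have upos := u_pos u hu hpos
  have urpos : ∀ m, (0:ℝ) < (u m : ℝ) := fun m => by exact_mod_cast upos m
  -- choose the subsequence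
  set K₀ : ℕ := ⌈(2:ℝ) / δ⌉₊ with hK₀
  obtain ⟨f, hf1, hf2⟩ : ∃ f : ℕ → ℕ, (∀ m, m < f m) ∧ (∀ m, K₀ * u (f m) < u (f m + 1)) := by
    choose f h1 h2 using exists_big u hu hpos hnb
    exact ⟨fun m => f m K₀, fun m => h1 m K₀, fun m => h2 m K₀⟩
  set n : ℕ → ℕ := fun k => f^[k] (f 0) with hn
  have hn0 : ∀ k, n (k + 1) = f (n k) := fun k => Function.iterate_succ_apply' f k (f 0)
  have hnmono : StrictMono n :=
    strictMono_nat_of_lt_succ (fun k => by rw [hn0]; exact hf1 _)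
  have hnK : ∀ k, K₀ * u (n k) < u (n k + 1) := by
    intro k
    cases k with
    | zero => exact hf2 0
    | succ k => rw [hn0]; exact hf2 _
  -- ratio estimate (real form)
  have hratio : ∀ k, (2 / δ) * (u (n k) : ℝ) ≤ (u (n k + 1) : ℝ) := by
    intro k
    have h1 : (2:ℝ) / δ ≤ (K₀ : ℝ) := Nat.le_ceil _
    have h2 : ((K₀ * u (n k) : ℕ) : ℝ) ≤ (u (n k + 1) : ℝ) := by
      exact_mod_cast (hnK k).le
    push_cast at h2
    nlinarith [urpos (n k)]
  -- the coefficients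
  set c : ℕ → ℕ := fun k => ⌊δ * (u (n k + 1) : ℝ) / (u (n k) : ℝ)⌋₊ with hc
  set r : ℕ → ℝ := fun k => (c k : ℝ) / (u (n k + 1) : ℝ) with hrdef
  have hr0 : ∀ k, 0 ≤ r k := fun k => by positivity
  have hc_le : ∀ k, (c k : ℝ) ≤ δ * (u (n k + 1) : ℝ) / (u (n k) : ℝ) :=
    fun k => Nat.floor_le (by positivity)
  have hc_gt : ∀ k, δ * (u (n k + 1) : ℝ) / (u (n k) : ℝ) - 1 < (c k : ℝ) :=
    fun k => Nat.sub_one_lt_floor _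
  have hr_le : ∀ k, r k ≤ δ / (u (n k) : ℝ) := by
    intro k
    rw [hrdef]
    have := hc_le k
    have h1 := urpos (n k)
    have h2 := urpos (n k + 1)
    rw [div_le_div_iff₀ h2 h1]
    calc (c k : ℝ) * (u (n k)) ≤ (δ * (u (n k + 1)) / (u (n k))) * (u (n k)) := by nlinarith
      _ = δ * (u (n k + 1)) := by field_simp
  have hr_ge : ∀ k, δ / (2 * (u (n k) : ℝ)) ≤ r k := by
    intro k
    have h1 := urpos (n k)
    have h2 := urpos (n k + 1)
    have h3 := hratio k
    have h4 := hc_gt k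
    rw [hrdef]
    rw [div_le_div_iff₀ (by positivity) h2]
    -- δ * u(nk+1) ≤ c k * (2 * u(nk))
    -- c k > δ u₊/u - 1, so c k * 2u > 2 δ u₊ - 2u ≥ 2 δ u₊ - δ u₊ = δ u₊
    have h5 : (2:ℝ) * (u (n k)) ≤ δ * (u (n k + 1)) := by
      have := hratio k
      calc (2:ℝ) * (u (n k)) = δ * ((2/δ) * (u (n k))) := by field_simp
        _ ≤ δ * (u (n k + 1)) := by nlinarith
    have h6 := mul_lt_mul_of_pos_right h4 h1
    have h7 : δ * (u (n k + 1) : ℝ) / (u (n k) : ℝ) * (u (n k) : ℝ) = δ * (u (n k + 1) : ℝ) := by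
      field_simp
    nlinarith
  -- geometric decay
  have hadd : ∀ k d, n k + d ≤ n (k + d) := by
    intro k d
    induction d with
    | zero => simp
    | succ d ih =>
      have := hnmono (show k + d < k + (d + 1) by omega)
      omega
  have hdecay : ∀ k j, k ≤ j → (2:ℝ) ^ (j - k) * (u (n k) : ℝ) ≤ (u (n j) : ℝ) := by
    intro k j hkj
    have h1 : n k + (j - k) ≤ n j := by
      have := hadd k (j - k)
      rw [show k + (j - k) = j by omega] at this
      exact this
    have h2 : 2 ^ (j - k) * u (n k) ≤ u (n j) := by
      calc 2 ^ (j - k) * u (n k) ≤ 2 ^ (n j - n k) * u (n k) :=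
        Nat.mul_le_mul_right _ (Nat.pow_le_pow_right (by norm_num) (by omega))
        _ ≤ u (n j) := u_pow_le u hu hpos hdvd _ _ (by omega)
    exact_mod_cast h2
  have hu_nk : ∀ k, (2:ℝ) ^ k ≤ (u (n k) : ℝ) := by
    intro k
    have := hdecay 0 k (Nat.zero_le k)
    have h0 : (1:ℝ) ≤ (u (n 0) : ℝ) := by exact_mod_cast upos (n 0)
    simp only [Nat.sub_zero] at this
    nlinarith [pow_pos (by norm_num : (0:ℝ) < 2) k]
  have hr_le2 : ∀ k, r k ≤ δ * (1 / 2) ^ k := by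
    intro k
    have h1 := hr_le k
    have h2 := hu_nk k
    have h3 : (0:ℝ) < 2 ^ k := by positivity
    have h4 := urpos (n k)
    calc r k ≤ δ / (u (n k) : ℝ) := h1
      _ ≤ δ / 2 ^ k := by apply div_le_div_of_nonneg_left hδ0.le h3 h2
      _ = δ * (1 / 2) ^ k := by rw [div_pow, one_pow]; ring
  have hgeo : Summable (fun k : ℕ => δ * (1 / 2 : ℝ) ^ k) := summable_geometric_two.mul_left δ
  have hgeo_sum : ∑' k : ℕ, δ * (1 / 2 : ℝ) ^ k = 2 * δ := by
    rw [tsum_mul_left, tsum_geometric_two]; ring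
  have hsum : Summable r := Summable.of_nonneg_of_le hr0 hr_le2 hgeo
  -- integrality helper
  have hint : ∀ k m, n k + 1 ≤ m → ∃ z : ℕ, (u m : ℝ) * r k = z := by
    intro k m hkm
    refine ⟨c k * (u m / u (n k + 1)), ?_⟩
    have hdvd' : u (n k + 1) ∣ u m := u_dvd_of_le u hdvd hkm
    have hne : ((u (n k + 1) : ℕ) : ℝ) ≠ 0 := by exact_mod_cast (upos (n k + 1)).ne'
    have hz : ((u m / u (n k + 1) : ℕ) : ℝ) = (u m : ℝ) / (u (n k + 1) : ℝ) :=
      Nat.cast_div hdvd' hne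
    rw [hrdef, Nat.cast_mul, hz]
    field_simp
    try ring
  have hintz2 : ∀ k m, n k + 1 ≤ m → ∃ z : ℤ, (u m : ℝ) * r k = z := by
    intro k m hkm
    obtain ⟨z, hz⟩ := hint k m hkm
    exact ⟨(z : ℤ), by rw [hz]; push_cast; ring⟩
  have hhalf : 2 * δ < 1 / 2 := by linarith
  -- the main splitting estimate
  have E : ∀ (r' : ℕ → ℝ), (∀ k, 0 ≤ r' k) → (∀ k, r' k ≤ r k) →
      (∀ k m, n k + 1 ≤ m → ∃ z : ℤ, (u m : ℝ) * r' k = z) →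
      ∀ (m k₁ : ℕ), (∀ k, k < k₁ → n k + 1 ≤ m) → m ≤ n k₁ →
      ∃ t : ℝ, ((u m : ℤ) • (((∑' k, r' k : ℝ)) : AddCircle (1:ℝ)) = (t : AddCircle (1:ℝ)))
        ∧ (u m : ℝ) * r' k₁ ≤ t ∧ 0 ≤ t ∧ t ≤ 2 * δ := by
    intro r' h0 hle hintz m k₁ hsmall hbig
    have hsum' : Summable r' := Summable.of_nonneg_of_le h0 hle hsum
    set g : ℕ → ℝ := fun k => (u m : ℝ) * r' k with hg
    have hgsum : Summable g := hsum'.mul_left _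
    have hsplit := Summable.sum_add_tsum_nat_add k₁ hgsum
    set t : ℝ := ∑' i, g (i + k₁) with ht
    have hgs : Summable fun i => g (i + k₁) := (summable_nat_add_iff k₁).2 hgsum
    have hz' : ∀ i, ∃ z : ℤ, (i < k₁ → g i = z) := by
      intro i
      by_cases hi : i < k₁
      · obtain ⟨z, hz⟩ := hintz i m (hsmall i hi)
        exact ⟨z, fun _ => hz⟩
      · exact ⟨0, fun h => absurd h hi⟩
    choose zf hzf using hz'
    have hA : (∑ i ∈ Finset.range k₁, g i) = ((∑ i ∈ Finset.range k₁, zf i : ℤ) : ℝ) := by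
      push_cast
      exact Finset.sum_congr rfl (fun i hi => hzf i (Finset.mem_range.mp hi))
    have hg0 : ∀ i, 0 ≤ g i := fun i => mul_nonneg (urpos m).le (h0 i)
    have hbound : ∀ i, g (i + k₁) ≤ δ * (1 / 2 : ℝ) ^ i := by
      intro i
      have d1 : (u m : ℝ) ≤ (u (n k₁) : ℝ) := by exact_mod_cast hu.monotone hbig
      have d2 := hdecay k₁ (i + k₁) (by omega)
      rw [show i + k₁ - k₁ = i by omega] at d2
      have d4 : r' (i + k₁) ≤ δ / (u (n (i + k₁)) : ℝ) := le_trans (hle _) (hr_le (i + k₁))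
      have hup := urpos (n (i + k₁))
      have h2i : (0:ℝ) < 2 ^ i := by positivity
      have key : (u m : ℝ) * δ * 2 ^ i ≤ δ * (u (n (i + k₁)) : ℝ) := by
        nlinarith [mul_le_mul_of_nonneg_right d1 (by positivity : (0:ℝ) ≤ δ * 2 ^ i),
          mul_le_mul_of_nonneg_left d2 hδ0.le]
      calc g (i + k₁) ≤ (u m : ℝ) * (δ / (u (n (i + k₁)) : ℝ)) :=
            mul_le_mul_of_nonneg_left d4 (urpos m).le
        _ ≤ δ * (1 / 2 : ℝ) ^ i := by
            have e2 : (u m : ℝ) * (δ / (u (n (i + k₁)) : ℝ))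
                = ((u m : ℝ) * δ) / ((u (n (i + k₁)) : ℝ)) := by ring
            have e3 : δ * ((1:ℝ) / 2) ^ i = δ / 2 ^ i := by
              rw [div_pow, one_pow]; ring
            rw [e2, e3, div_le_div_iff₀ hup h2i]
            nlinarith [key]
    refine ⟨t, ?_, ?_, ?_, ?_⟩
    · rw [zsmul_coe]
      have h2 : ((u m : ℤ) : ℝ) * (∑' k, r' k) = ∑' k, g k := by
        push_cast
        exact (Summable.tsum_mul_left ((u m : ℕ) : ℝ) hsum').symm
      rw [h2, ← hsplit, AddCircle.coe_add, hA, coe_int_eq_zero, zero_add]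
    · have := Summable.le_tsum hgs 0 (fun j _ => hg0 _)
      simpa using this
    · exact tsum_nonneg (fun i => hg0 _)
    · calc t ≤ ∑' i, δ * (1 / 2 : ℝ) ^ i := Summable.tsum_le_tsum hbound hgs hgeo
        _ = 2 * δ := hgeo_sum
  -- choice of the splitting index
  have hk₁ : ∀ m, ∃ k₁, (∀ k, k < k₁ → n k + 1 ≤ m) ∧ m ≤ n k₁ := by
    intro m
    have hex : ∃ k, m ≤ n k := ⟨m, hnmono.le_apply⟩
    classical
    refine ⟨Nat.find hex, fun k hk => ?_, Nat.find_spec hex⟩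
    have := Nat.find_min hex hk
    omega
  -- the approximating points and the limit point
  set rt : ℕ → ℕ → ℝ := fun K k => if k < K then r k else 0 with hrt
  have hrt0 : ∀ K k, 0 ≤ rt K k := by
    intro K k
    rw [hrt]
    dsimp only
    split
    · exact hr0 k
    · exact le_rfl
  have hrtle : ∀ K k, rt K k ≤ r k := by
    intro K k
    rw [hrt]; dsimp only
    split
    · exact le_rfl
    · exact hr0 k
  have hrtint : ∀ K k m, n k + 1 ≤ m → ∃ z : ℤ, (u m : ℝ) * rt K k = z := by
    intro K k m hkm
    rw [hrt]; dsimp only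
    split
    · exact hintz2 k m hkm
    · exact ⟨0, by simp⟩
  have hrtsum : ∀ K, Summable (rt K) := fun K => Summable.of_nonneg_of_le (hrt0 K) (hrtle K) hsum
  have hts : ∀ K, (∑' k, rt K k) = ∑ k ∈ Finset.range K, r k := by
    intro K
    rw [tsum_eq_sum (s := Finset.range K) (fun k hk => by
      rw [hrt]; dsimp only; exact if_neg (by simpa using hk))]
    exact Finset.sum_congr rfl fun k hk => by
      rw [hrt]; dsimp only; exact if_pos (Finset.mem_range.mp hk)
  set Y : ℕ → AddCircle (1:ℝ) := fun K => (((∑' k, rt K k : ℝ)) : AddCircle (1:ℝ)) with hY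
  set y : AddCircle (1:ℝ) := (((∑' k, r k : ℝ)) : AddCircle (1:ℝ)) with hy
  refine ⟨y, Y, ?_, ?_, ?_, ?_, ?_⟩
  · -- each Y K lies in t_u
    intro K
    have hev : ∀ᶠ m in atTop, (u m : ℤ) • Y K = 0 := by
      filter_upwards [eventually_ge_atTop (n K + 1)] with m hm
      have hallint : ∀ k ∈ Finset.range K, ∃ z : ℤ, (u m : ℝ) * r k = z := by
        intro k hk
        have hkK : k < K := Finset.mem_range.mp hk
        have : n k < n K := hnmono hkK
        exact hintz2 k m (by omega)
      have hz' : ∀ k, ∃ z : ℤ, (k < K → (u m : ℝ) * r k = z) := by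
        intro k
        by_cases hk : k < K
        · obtain ⟨z, hz⟩ := hallint k (Finset.mem_range.mpr hk)
          exact ⟨z, fun _ => hz⟩
        · exact ⟨0, fun h => absurd h hk⟩
      choose zf hzf using hz'
      rw [hY]
      dsimp only
      rw [zsmul_coe, hts K, Finset.mul_sum]
      have : ∑ k ∈ Finset.range K, ((u m : ℤ) : ℝ) * r k
          = ((∑ k ∈ Finset.range K, zf k : ℤ) : ℝ) := by
        push_cast
        exact Finset.sum_congr rfl fun k hk => hzf k (Finset.mem_range.mp hk)
      rw [this, coe_int_eq_zero]
    exact Tendsto.congr' (hev.mono fun m h => h.symm) tendsto_const_nhds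
  · -- ‖Y K‖ ≤ 2δ
    intro K
    have h1 : (0:ℝ) ≤ ∑' k, rt K k := tsum_nonneg (hrt0 K)
    have h2 : (∑' k, rt K k) ≤ 2 * δ := by
      calc (∑' k, rt K k) ≤ ∑' k, δ * (1 / 2 : ℝ) ^ k :=
          Summable.tsum_le_tsum (fun k => le_trans (hrtle K k) (hr_le2 k)) (hrtsum K) hgeo
        _ = 2 * δ := hgeo_sum
    rw [hY]
    dsimp only
    rw [norm_coe_of h1 (lt_of_le_of_lt h2 hhalf)]
    exact h2
  · -- ‖(u m) • Y K‖ ≤ 2δ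
    intro K m
    obtain ⟨k₁, hk1, hk2⟩ := hk₁ m
    obtain ⟨t, heq, _, ht0, ht2⟩ := E (rt K) (hrt0 K) (hrtle K) (hrtint K) m k₁ hk1 hk2
    rw [hY]
    dsimp only
    rw [heq, norm_coe_of ht0 (lt_of_le_of_lt ht2 hhalf)]
    exact ht2
  · -- Y K → y
    have hps : Tendsto (fun K => ∑ k ∈ Finset.range K, r k) atTop (𝓝 (∑' k, r k)) :=
      hsum.hasSum.tendsto_sum_nat
    have hcont : Continuous ((↑) : ℝ → AddCircle (1:ℝ)) := continuous_quotient_mk'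
    have := (hcont.tendsto _).comp hps
    apply Tendsto.congr _ this
    intro K
    rw [hY]
    dsimp only
    rw [hts K]
    rfl
  · -- y is not in t_u
    intro hcon
    have h1 : Tendsto (fun j => (u (n j) : ℤ) • y) atTop (𝓝 0) :=
      hcon.comp hnmono.tendsto_atTop
    have h2 : Tendsto (fun j => ‖(u (n j) : ℤ) • y‖) atTop (𝓝 0) := by
      simpa using h1.norm
    obtain ⟨j, hj⟩ := (h2.eventually (gt_mem_nhds (by linarith : (0:ℝ) < δ / 2))).exists
    obtain ⟨t, heq, htlow, ht0, ht2⟩ := E r hr0 (fun k => le_rfl) hintz2 (n j) j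
      (fun k hk => by have := hnmono hk; omega) le_rfl
    have hlow : δ / 2 ≤ t := by
      have h3 : (u (n j) : ℝ) * (δ / (2 * (u (n j) : ℝ))) ≤ (u (n j) : ℝ) * r j :=
        mul_le_mul_of_nonneg_left (hr_ge j) (urpos (n j)).le
      have h4 : (u (n j) : ℝ) * (δ / (2 * (u (n j) : ℝ))) = δ / 2 := by
        have hne : ((u (n j) : ℕ) : ℝ) ≠ 0 := (urpos (n j)).ne'
        field_simp
      linarith
    have : ‖(u (n j) : ℤ) • y‖ = t := by
      rw [hy, heq, norm_coe_of ht0 (lt_of_le_of_lt ht2 hhalf)]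
    linarith [hj, this.symm ▸ hlow]



variable (u : ℕ → ℕ)

theorem imp_da (hu : StrictMono u) (hpos : 1 ≤ u 0) (hdvd : ∀ n, u n ∣ u (n + 1))
    (hd : ∃ F : ℕ → Set (AddCircle (1 : ℝ)), (∀ i, IsClosed (F i)) ∧
      {x : AddCircle (1 : ℝ) |
        Tendsto (fun n => (u n : ℤ) • x) atTop (𝓝 0)} = ⋃ i, F i) :
    ∃ C : ℕ, ∀ n, u (n + 1) ≤ C * u n := by
  by_contra hcon
  push_neg at hcon
  obtain ⟨F, hFc, hFU⟩ := hd
  haveI : Fact ((0:ℝ) < 1) := ⟨zero_lt_one⟩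
  set tu := {x : AddCircle (1 : ℝ) |
    Tendsto (fun n => (u n : ℤ) • x) atTop (𝓝 0)} with htu
  set S : Set (AddCircle (1:ℝ) × C₀(ℕ, ℝ)) :=
    {z | ∀ m, z.2 m = ‖(u m : ℤ) • z.1‖} with hS
  have hevalc : ∀ m : ℕ, Continuous (fun z : AddCircle (1:ℝ) × C₀(ℕ, ℝ) => z.2 m) := by
    intro m
    have h1 : Continuous (fun f : C₀(ℕ, ℝ) => f.toBCF m) :=
      (continuous_eval_const (x := m)).comp
        ZeroAtInftyContinuousMap.isometry_toBCF.continuous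
    exact h1.comp continuous_snd
  have hSclosed : IsClosed S := by
    have : S = ⋂ m, {z : AddCircle (1:ℝ) × C₀(ℕ, ℝ) | z.2 m = ‖(u m : ℤ) • z.1‖} := by
      ext z; simp [hS, Set.mem_iInter]
    rw [this]
    exact isClosed_iInter fun m => isClosed_eq (hevalc m)
      (continuous_norm.comp ((continuous_zsmul _).comp continuous_fst))
  have hmk : ∀ x : AddCircle (1:ℝ), x ∈ tu →
      ∃ g : C₀(ℕ, ℝ), ∀ m, g m = ‖(u m : ℤ) • x‖ := by
    intro x hx
    refine ⟨⟨⟨fun m => ‖(u m : ℤ) • x‖, continuous_of_discreteTopology⟩, ?_⟩, fun m => rfl⟩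
    rw [Filter.cocompact_eq_cofinite, Nat.cofinite_eq_atTop]
    simpa using hx.norm
  have hmem : ∀ z : AddCircle (1:ℝ) × C₀(ℕ, ℝ), z ∈ S → z.1 ∈ tu := by
    intro z hz
    have h1 : Tendsto z.2 atTop (𝓝 0) := by
      have h2 := zero_at_infty z.2
      rwa [Filter.cocompact_eq_cofinite, Nat.cofinite_eq_atTop] at h2
    have h2 : Tendsto (fun m => ‖(u m : ℤ) • z.1‖) atTop (𝓝 0) :=
      h1.congr (fun m => hz m)
    exact tendsto_zero_iff_norm_tendsto_zero.mpr h2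
  have h0tu : (0 : AddCircle (1:ℝ)) ∈ tu := by
    simp only [htu, Set.mem_setOf_eq, smul_zero]
    exact tendsto_const_nhds
  obtain ⟨g0, hg0⟩ := hmk 0 h0tu
  haveI : Nonempty ↥S := ⟨⟨((0 : AddCircle (1:ℝ)), g0), fun m => hg0 m⟩⟩
  haveI : CompleteSpace ↥S := hSclosed.completeSpace_coe
  haveI : BaireSpace ↥S := BaireSpace.of_completelyPseudoMetrizable
  set G : ℕ → Set ↥S := fun i => {z | (z : AddCircle (1:ℝ) × C₀(ℕ, ℝ)).1 ∈ F i} with hG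
  have hGc : ∀ i, IsClosed (G i) :=
    fun i => (hFc i).preimage (continuous_fst.comp continuous_subtype_val)
  have hGu : (⋃ i, G i) = Set.univ := by
    ext z
    simp only [Set.mem_iUnion, Set.mem_univ, iff_true]
    have h1 : (z : AddCircle (1:ℝ) × C₀(ℕ, ℝ)).1 ∈ tu := hmem _ z.2
    rw [hFU] at h1
    simpa [hG] using h1
  obtain ⟨i, hi⟩ := nonempty_interior_of_iUnion_of_closed hGc hGu
  obtain ⟨z₀, hz₀⟩ := hi
  rw [mem_interior_iff_mem_nhds, Metric.mem_nhds_iff] at hz₀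
  obtain ⟨ε, hε, hball⟩ := hz₀
  set x₀ : AddCircle (1:ℝ) := (z₀ : AddCircle (1:ℝ) × C₀(ℕ, ℝ)).1 with hx₀
  have hx₀tu : x₀ ∈ tu := hmem _ z₀.2
  set δ : ℝ := min (ε / 16) (1 / 16) with hδ
  have hδ0 : 0 < δ := lt_min (by linarith) (by norm_num)
  have hδ1 : δ ≤ 1 / 16 := min_le_right _ _
  have hδε : 2 * δ < ε := by
    have := min_le_left (ε / 16) (1 / 16)
    have : δ ≤ ε / 16 := this
    linarith
  obtain ⟨y, Y, hYtu, hYnorm, hYsup, hYlim, hynot⟩ :=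
    construction u hu hpos hdvd hcon hδ0 hδ1
  have hkey : ∀ K, x₀ + Y K ∈ F i := by
    intro K
    have hxY : x₀ + Y K ∈ tu := by
      have h1 := (hx₀tu.add (hYtu K))
      simp only [add_zero] at h1
      show Tendsto (fun n => (u n : ℤ) • (x₀ + Y K)) atTop (𝓝 0)
      simpa [smul_add] using h1
    obtain ⟨g, hg⟩ := hmk _ hxY
    set zK : ↥S := ⟨(x₀ + Y K, g), fun m => hg m⟩ with hzK
    have hdist : dist zK z₀ < ε := by
      rw [Subtype.dist_eq, Prod.dist_eq]
      have hd1 : dist (x₀ + Y K) x₀ ≤ 2 * δ := by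
        rw [dist_eq_norm, add_sub_cancel_left]
        exact hYnorm K
      have hd2 : dist g (z₀ : AddCircle (1:ℝ) × C₀(ℕ, ℝ)).2 ≤ 2 * δ := by
        rw [← ZeroAtInftyContinuousMap.dist_toBCF_eq_dist]
        rw [BoundedContinuousFunction.dist_le (by linarith)]
        intro m
        have e1 : g m = ‖(u m : ℤ) • (x₀ + Y K)‖ := hg m
        have e2 : (z₀ : AddCircle (1:ℝ) × C₀(ℕ, ℝ)).2 m = ‖(u m : ℤ) • x₀‖ := z₀.2 m
        have e3 : (u m : ℤ) • (x₀ + Y K) - (u m : ℤ) • x₀ = (u m : ℤ) • Y K := by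
          rw [smul_add, add_sub_cancel_left]
        calc dist (g.toBCF m) ((z₀ : AddCircle (1:ℝ) × C₀(ℕ, ℝ)).2.toBCF m)
            = |‖(u m : ℤ) • (x₀ + Y K)‖ - ‖(u m : ℤ) • x₀‖| := by
              rw [show (g.toBCF m) = g m from rfl,
                show ((z₀ : AddCircle (1:ℝ) × C₀(ℕ, ℝ)).2.toBCF m)
                  = (z₀ : AddCircle (1:ℝ) × C₀(ℕ, ℝ)).2 m from rfl, e1, e2, Real.dist_eq]
          _ ≤ ‖(u m : ℤ) • (x₀ + Y K) - (u m : ℤ) • x₀‖ := abs_norm_sub_norm_le _ _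
          _ = ‖(u m : ℤ) • Y K‖ := by rw [e3]
          _ ≤ 2 * δ := hYsup K m
      calc max (dist (x₀ + Y K) x₀) (dist g (z₀ : AddCircle (1:ℝ) × C₀(ℕ, ℝ)).2)
          ≤ 2 * δ := max_le hd1 hd2
        _ < ε := hδε
    have := hball hdist
    exact this
  -- pass to the limit
  have hlim : Tendsto (fun K => x₀ + Y K) atTop (𝓝 (x₀ + y)) :=
    (tendsto_const_nhds.add hYlim)
  have hxyF : x₀ + y ∈ F i :=
    (hFc i).mem_of_tendsto hlim (Filter.Eventually.of_forall hkey)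
  have hxy_tu : x₀ + y ∈ tu := by
    rw [htu] at *
    have : F i ⊆ ⋃ j, F j := Set.subset_iUnion F i
    rw [← hFU] at this
    exact this hxyF
  -- hence y ∈ tu, contradiction
  apply hynot
  have h1 := hxy_tu.sub hx₀tu
  simp only [sub_zero] at h1
  apply h1.congr
  intro m
  rw [smul_add, add_sub_cancel_left]


end

end TuAux

open Filter Topology

/-- Theorem E: for an a-sequence `u`, the following are equivalent:
(a) the ratio sequence `(q_n)` is bounded; (b) `t_u(𝕋) ⊆ ℚ/ℤ` (every element
of `t_u(𝕋)` is torsion); (c) `t_u(𝕋)` is countable; (d) `t_u(𝕋)` is an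
`F_σ`-subset of `𝕋`. In particular, if the ratios are unbounded (e.g. `n!` or
`2^(2^n)`), then `t_u(𝕋)` is not `F_σ`. -/
theorem tu_Fsigma_tfae (u : ℕ → ℕ) (hu : StrictMono u)
    (hpos : 1 ≤ u 0) (hdvd : ∀ n, u n ∣ u (n + 1)) :
    [(∃ C : ℕ, ∀ n, u (n + 1) ≤ C * u n),
     (∀ x : AddCircle (1 : ℝ),
        Tendsto (fun n => (u n : ℤ) • x) atTop (𝓝 0) → IsOfFinAddOrder x),
     ({x : AddCircle (1 : ℝ) |
        Tendsto (fun n => (u n : ℤ) • x) atTop (𝓝 0)}.Countable),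
     (∃ F : ℕ → Set (AddCircle (1 : ℝ)), (∀ i, IsClosed (F i)) ∧
        {x : AddCircle (1 : ℝ) |
          Tendsto (fun n => (u n : ℤ) • x) atTop (𝓝 0)} = ⋃ i, F i)].TFAE := by
  tfae_have 1 → 2 := TuAux.imp_ab u hu hpos hdvd
  tfae_have 2 → 3 := fun h =>
    TuAux.torsion_countable.mono (fun x hx => h x hx)
  tfae_have 3 → 4 := fun h => TuAux.imp_cd _ h
  tfae_have 4 → 1 := fun h => TuAux.imp_da u hu hpos hdvd h
  tfae_finish
end
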